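/- Let {f_i}_{i=1}^{α} be a finite collection of functions, where f_i colors k_i-element subsets of a ground set with colors from [n]. Then there exists a finite N ∈ ℕ and a subset C ⊆ [N] with |C| ≥ n such that for every i, the restriction of f_i to k_i-element subsets of C is constant. -/
import Mathlib

/-- Infinite hypergraph Ramsey theorem on ℕ. -/
theorem ramseyInf (n : ℕ) : ∀ (k : ℕ) (f : Finset ℕ → Fin n) (S : Set ℕ), S.Infinite →
    ∃ T : Set ℕ, T ⊆ S ∧ T.Infinite ∧ ∃ c, ∀ t : Finset ℕ, ↑t ⊆ T → t.card = k → f t = c := by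
  intro k
  induction k with
  | zero =>
    intro f S hS
    refine ⟨S, subset_rfl, hS, f ∅, fun t _ hc => ?_⟩
    rw [Finset.card_eq_zero.mp hc]
  | succ k ih =>
    intro f S hS
    have H : ∀ U : {S : Set ℕ // S.Infinite}, ∃ (T : Set ℕ) (c : Fin n),
        T ⊆ (↑U : Set ℕ) \ {sInf ↑U} ∧ T.Infinite ∧
        ∀ t : Finset ℕ, ↑t ⊆ T → t.card = k → f (insert (sInf ↑U) t) = c := by
      rintro ⟨U, hU⟩
      obtain ⟨T, hTs, hTi, c, hc⟩ := ih (fun t => f (insert (sInf U) t)) (U \ {sInf U})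
        (hU.diff (Set.finite_singleton _))
      exact ⟨T, c, hTs, hTi, hc⟩
    choose T col hsub hinf hcol using H
    set seq : ℕ → {S : Set ℕ // S.Infinite} :=
      fun m => Nat.rec (motive := fun _ => {S : Set ℕ // S.Infinite})
        ⟨S, hS⟩ (fun _ p => ⟨T p, hinf p⟩) m with hseqdef
    set a : ℕ → ℕ := fun i => sInf ↑(seq i) with hadef
    have hstep : ∀ i, (↑(seq (i+1)) : Set ℕ) = T (seq i) := fun i => rfl
    have hsub' : ∀ i, (↑(seq (i+1)) : Set ℕ) ⊆ ↑(seq i) \ {a i} := by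
      intro i; rw [hstep]; exact hsub (seq i)
    have hamem : ∀ i, a i ∈ (↑(seq i) : Set ℕ) := fun i => Nat.sInf_mem (seq i).2.nonempty
    have hmono : ∀ i j, i ≤ j → (↑(seq j) : Set ℕ) ⊆ ↑(seq i) := by
      intro i j hij
      induction j, hij using Nat.le_induction with
      | base => exact subset_rfl
      | succ j hij ihm => exact fun x hx => ihm ((hsub' j hx).1)
    have hstrict : StrictMono a := by
      apply strictMono_nat_of_lt_succ
      intro i
      have h1 := hsub' i (hamem (i+1))
      exact lt_of_le_of_ne (Nat.sInf_le h1.1) (fun h => h1.2 h.symm)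
    have hcol' : ∀ i, ∀ t : Finset ℕ, ↑t ⊆ (↑(seq (i+1)) : Set ℕ) → t.card = k →
        f (insert (a i) t) = col (seq i) := by
      intro i t ht hc
      exact hcol (seq i) t (by rwa [hstep] at ht) hc
    obtain ⟨c0, hc0⟩ := Finite.exists_infinite_fiber (fun i => col (seq i))
    have hI : ((fun i => col (seq i)) ⁻¹' {c0}).Infinite := Set.infinite_coe_iff.mp hc0
    refine ⟨a '' ((fun i => col (seq i)) ⁻¹' {c0}), ?_, ?_, c0, ?_⟩
    · rintro x ⟨i, _, rfl⟩
      exact hmono 0 i (Nat.zero_le i) (hamem i)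
    · exact hI.image (hstrict.injective.injOn)
    · intro t ht hc
      have htne : t.Nonempty := Finset.card_pos.mp (by omega)
      obtain ⟨i, hiI, hix⟩ := ht (t.min'_mem htne)
      have herase : ↑(t.erase (t.min' htne)) ⊆ (↑(seq (i+1)) : Set ℕ) := by
        intro y hy
        rw [Finset.coe_erase] at hy
        obtain ⟨j, _, rfl⟩ := ht hy.1
        have hij : i < j := by
          apply hstrict.lt_iff_lt.mp
          rw [hix]
          exact lt_of_le_of_ne (Finset.min'_le t _ hy.1) (fun h => hy.2 h.symm)
        exact hmono (i+1) j hij (hamem j)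
      have hcard : (t.erase (t.min' htne)).card = k := by
        rw [Finset.card_erase_of_mem (t.min'_mem htne)]; omega
      have := hcol' i _ herase hcard
      rw [hix, Finset.insert_erase (t.min'_mem htne)] at this
      rw [this]; exact hiI

/-- Simultaneous version for α colorings. -/
theorem ramseyMulti (n : ℕ) : ∀ (α : ℕ) (k : Fin α → ℕ) (f : Fin α → Finset ℕ → Fin n)
    (S : Set ℕ), S.Infinite → ∃ T : Set ℕ, T ⊆ S ∧ T.Infinite ∧
    ∀ i, ∃ c, ∀ t : Finset ℕ, ↑t ⊆ T → t.card = k i → f i t = c := by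
  intro α
  induction α with
  | zero =>
    intro k f S hS
    exact ⟨S, subset_rfl, hS, fun i => i.elim0⟩
  | succ α ih =>
    intro k f S hS
    obtain ⟨T, hTs, hTi, hT⟩ := ih (fun i => k i.castSucc) (fun i => f i.castSucc) S hS
    obtain ⟨T', hT's, hT'i, c, hc⟩ := ramseyInf n (k (Fin.last α)) (f (Fin.last α)) T hTi
    refine ⟨T', hT's.trans hTs, hT'i, fun i => ?_⟩
    induction i using Fin.lastCases with
    | last => exact ⟨c, hc⟩
    | cast j =>
      obtain ⟨c', hc'⟩ := hT j
      exact ⟨c', fun t ht hcard => hc' t (ht.trans hT's) hcard⟩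

/-- Finite hypergraph Ramsey theorem, simultaneously for a finite collection of
colorings: given `fᵢ` coloring the `kᵢ`-element subsets of the ground set `ℕ`
with colors from `[n]`, there exist a finite `N` and `C ⊆ [N]` with `|C| ≥ n`
such that every `fᵢ` is constant on the `kᵢ`-element subsets of `C`. -/
theorem stmt5 (α n : ℕ) (k : Fin α → ℕ) (f : Fin α → Finset ℕ → Fin n) :
    ∃ N : ℕ, ∃ C : Finset ℕ, (∀ x ∈ C, x < N) ∧ n ≤ C.card ∧
      ∀ i, ∀ a ⊆ C, a.card = k i → ∀ b ⊆ C, b.card = k i → f i a = f i b := by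
  obtain ⟨T, _, hTi, hT⟩ := ramseyMulti n α k f Set.univ Set.infinite_univ
  obtain ⟨C, hCs, hCc⟩ := hTi.exists_subset_card_eq n
  obtain ⟨N, hN⟩ := C.exists_nat_subset_range
  refine ⟨N, C, fun x hx => Finset.mem_range.mp (hN hx), hCc.ge, fun i a ha hac b hb hbc => ?_⟩
  obtain ⟨c, hc⟩ := hT i
  rw [hc a ((Finset.coe_subset.mpr ha).trans hCs) hac,
      hc b ((Finset.coe_subset.mpr hb).trans hCs) hbc]
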